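/- arXiv:1709.00329 — 3 statements merged into one kernel-verified Lean document; each statement's English description precedes it below -/
import Mathlib

section
/- If φ is a rational multiple of π and 2cos φ = a/b with a, b coprime integers, b ≠ 0, then b = ±1; consequently cos φ ∈ {0, ±1/2, ±1} (Niven's theorem). -/
open Polynomial

lemma dickson_aux : ∀ n : ℕ, (Polynomial.dickson 1 (1:ℤ) n).degree ≤ n ∧
    (1 ≤ n → (Polynomial.dickson 1 (1:ℤ) n).Monic ∧ (Polynomial.dickson 1 (1:ℤ) n).degree = n)
  | 0 => by
      refine ⟨?_, by omega⟩
      have h2 : Polynomial.dickson 1 (1:ℤ) 0 = C 2 := by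
        rw [dickson_zero]; norm_num
      rw [h2]
      exact degree_C_le.trans (by simp)
  | 1 => by
      rw [dickson_one]
      exact ⟨le_of_eq degree_X, fun _ => ⟨monic_X, degree_X⟩⟩
  | n + 2 => by
      have ih1 := dickson_aux (n+1)
      have ih0 := dickson_aux n
      obtain ⟨hm, hd⟩ := ih1.2 (by omega)
      have hdeg : (X * Polynomial.dickson 1 (1:ℤ) (n+1)).degree = ((n + 2 : ℕ) : WithBot ℕ) := by
        rw [degree_mul, degree_X, hd]
        norm_cast
        omega
      have hmon : (X * Polynomial.dickson 1 (1:ℤ) (n+1)).Monic := monic_X.mul hm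
      have hlt : (C (1:ℤ) * Polynomial.dickson 1 (1:ℤ) n).degree <
          (X * Polynomial.dickson 1 (1:ℤ) (n+1)).degree := by
        rw [hdeg, C_1, one_mul]
        calc (Polynomial.dickson 1 (1:ℤ) n).degree ≤ (n : WithBot ℕ) := ih0.1
        _ < ((n+2 : ℕ) : WithBot ℕ) := by exact_mod_cast by omega
      have hden : (Polynomial.dickson 1 (1:ℤ) (n+2)).degree = ((n+2:ℕ) : WithBot ℕ) := by
        rw [dickson_add_two, sub_eq_add_neg, degree_add_eq_left_of_degree_lt, hdeg]
        rwa [degree_neg]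
      refine ⟨le_of_eq hden, fun _ => ⟨?_, hden⟩⟩
      rw [dickson_add_two]
      exact hmon.sub_of_left hlt

theorem stmt_0 (φ : ℝ) (a b : ℤ) (hrat : ∃ q : ℚ, φ / Real.pi = q)
    (hb : b ≠ 0) (hcop : IsCoprime a b)
    (hcos : 2 * Real.cos φ = (a : ℝ) / (b : ℝ)) :
    (b = 1 ∨ b = -1) ∧
      (Real.cos φ = 0 ∨ Real.cos φ = 1/2 ∨ Real.cos φ = -(1/2) ∨
        Real.cos φ = 1 ∨ Real.cos φ = -1) := by
  obtain ⟨q, hq⟩ := hrat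
  have hφ : φ = (q : ℝ) * Real.pi := by
    field_simp at hq; linarith [hq]
  set n : ℕ := q.den with hn
  have hn1 : 1 ≤ n := q.pos
  have hnφ : (n : ℝ) * φ = (q.num : ℝ) * Real.pi := by
    rw [hφ]
    have hd : ((q.den : ℚ)) ≠ 0 := by exact_mod_cast q.den_nz
    have hqq : (q.num : ℚ) = q * (q.den : ℚ) :=
      (div_eq_iff hd).mp (Rat.num_div_den q)
    have : ((q.num : ℝ)) = (q : ℝ) * (n : ℝ) := by
      rw [hn]; exact_mod_cast hqq
    rw [this]; ring
  -- the value 2 cos (n φ) is an integer (±2)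
  have habs : |Real.cos ((n:ℝ) * φ)| = 1 := by
    rw [hnφ]; exact Real.abs_cos_int_mul_pi q.num
  obtain ⟨c, hc⟩ : ∃ c : ℤ, (c : ℝ) = 2 * Real.cos ((n:ℝ) * φ) := by
    rcases abs_eq (by norm_num : (0:ℝ) ≤ 1) |>.mp habs with h | h
    · exact ⟨2, by rw [h]; norm_num⟩
    · exact ⟨-2, by rw [h]; norm_num⟩
  -- the monic integer polynomial
  set Q : Polynomial ℤ := Polynomial.dickson 1 (1:ℤ) n - Polynomial.C c with hQ
  have hdeg : (Polynomial.dickson 1 (1:ℤ) n).degree = (n : WithBot ℕ) := ((dickson_aux n).2 hn1).2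
  have hQmonic : Q.Monic := by
    apply (((dickson_aux n).2 hn1).1).sub_of_left
    rw [hdeg]
    exact lt_of_le_of_lt Polynomial.degree_C_le (by exact_mod_cast by omega)
  -- complex evaluation
  have key : Polynomial.eval (2 * Complex.cos φ) (Polynomial.dickson 1 (1:ℂ) n)
      = 2 * Complex.cos ((n:ℂ) * (φ:ℂ)) := by
    have h1 : Complex.exp ((φ:ℂ) * Complex.I) * Complex.exp (-((φ:ℂ) * Complex.I)) = 1 := by
      rw [← Complex.exp_add]; simp
    have h2 : Complex.exp ((φ:ℂ) * Complex.I) + Complex.exp (-((φ:ℂ) * Complex.I))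
        = 2 * Complex.cos (φ:ℂ) := by
      rw [Complex.cos]; ring
    rw [← h2, Polynomial.dickson_one_one_eval_add_inv _ _ h1]
    rw [← Complex.exp_nat_mul, ← Complex.exp_nat_mul, Complex.cos]
    ring_nf
  set r : ℚ := (a : ℚ) / (b : ℚ) with hr
  have hrR : (r : ℝ) = 2 * Real.cos φ := by
    rw [hr, hcos]; push_cast; ring
  have haev : Polynomial.aeval r Q = 0 := by
    have hinj : Function.Injective (algebraMap ℚ ℂ) := (algebraMap ℚ ℂ).injective
    apply hinj
    rw [map_zero, ← Polynomial.aeval_algebraMap_apply]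
    have hrC : (algebraMap ℚ ℂ) r = 2 * Complex.cos (φ:ℂ) := by
      have : ((r:ℝ):ℂ) = ((2 * Real.cos φ : ℝ) : ℂ) := congrArg (fun x : ℝ => (x:ℂ)) hrR
      rw [show (algebraMap ℚ ℂ) r = ((r:ℝ):ℂ) by norm_cast]
      rw [this]; push_cast [Complex.ofReal_cos]; ring
    rw [hrC, hQ, map_sub, Polynomial.aeval_C]
    have : (Polynomial.aeval (2 * Complex.cos (φ:ℂ))) (Polynomial.dickson 1 (1:ℤ) n)
        = Polynomial.eval (2 * Complex.cos (φ:ℂ)) (Polynomial.dickson 1 (1:ℂ) n) := by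
      rw [Polynomial.aeval_def, Polynomial.eval₂_eq_eval_map, Polynomial.map_dickson]
      norm_num
    rw [this, key]
    have : ((c:ℝ):ℂ) = ((2 * Real.cos ((n:ℝ)*φ) : ℝ) : ℂ) := congrArg (fun x : ℝ => (x:ℂ)) hc
    push_cast [Complex.ofReal_cos] at this
    rw [show (algebraMap ℤ ℂ) c = ((c:ℝ):ℂ) by push_cast; norm_cast]
    push_cast
    rw [this]
    ring
  have hint : IsIntegral ℤ r := ⟨Q, hQmonic, by rwa [← Polynomial.aeval_def]⟩
  obtain ⟨z, hz⟩ := IsIntegrallyClosed.isIntegral_iff.mp hint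
  -- b is a unit
  have hza : (a : ℚ) = (z : ℚ) * (b : ℚ) := by
    have hb' : (b:ℚ) ≠ 0 := by exact_mod_cast hb
    rw [show (algebraMap ℤ ℚ) z = (z:ℚ) from rfl, hr] at hz
    field_simp at hz
    linarith [hz]
  have hdvd : b ∣ a := by
    refine ⟨z, ?_⟩
    have : (a:ℚ) = ((b * z : ℤ) : ℚ) := by push_cast; linarith [hza]
    exact_mod_cast this
  have hunit : IsUnit b := hcop.symm.isUnit_of_dvd hdvd
  have hb1 : b = 1 ∨ b = -1 := Int.isUnit_iff.mp hunit
  refine ⟨hb1, ?_⟩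
  -- 2 cos φ = z
  have h2c : 2 * Real.cos φ = (z : ℝ) := by
    rw [← hrR, ← hz]; norm_cast
  have hbound : -(1:ℝ) ≤ Real.cos φ ∧ Real.cos φ ≤ 1 :=
    ⟨Real.neg_one_le_cos φ, Real.cos_le_one φ⟩
  have hzb : -2 ≤ z ∧ z ≤ 2 := by
    constructor
    · have : (-2:ℝ) ≤ (z:ℝ) := by nlinarith [h2c, hbound.1]
      exact_mod_cast this
    · have : (z:ℝ) ≤ 2 := by nlinarith [h2c, hbound.2]
      exact_mod_cast this
  obtain ⟨hz1, hz2⟩ := hzb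
  interval_cases z
  · right;right;right;right; push_cast at h2c; linarith
  · right;right;left; push_cast at h2c; linarith
  · left; push_cast at h2c; linarith
  · right;left; push_cast at h2c; linarith
  · right;right;right;left; push_cast at h2c; linarith
end

section
/- For the sequence defined by c_k = 2 cos(2^k φ), if 2 cos φ = a/b with gcd(a,b)=1 and b ≠ ±1, then the denominators of c_k (in lowest terms) are strictly increasing, in fact the denominator of c_{k+1} is the square of the denominator of c_k. -/
lemma den_sq_sub_two (q : ℚ) : (q ^ 2 - 2).den = q.den ^ 2 := by
  have hcop : IsCoprime q.num (q.den : ℤ) := by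
    rw [Int.isCoprime_iff_gcd_eq_one]
    exact q.reduced
  have hcop2 : IsCoprime (q.num ^ 2 - 2 * (q.den : ℤ) ^ 2) ((q.den : ℤ) ^ 2) := by
    have := (hcop.pow (m := 2) (n := 2))
    simpa [sub_eq_add_neg, mul_comm] using this.add_mul_left_left (-2)
  have hd0 : (0 : ℤ) < (q.den : ℤ) ^ 2 := by positivity
  have key : q ^ 2 - 2 = ((q.num ^ 2 - 2 * (q.den : ℤ) ^ 2 : ℤ) : ℚ) / (((q.den : ℤ) ^ 2 : ℤ) : ℚ) := by
    have hden : ((q.den : ℤ) : ℚ) ≠ 0 := by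
      exact_mod_cast q.den_nz
    have hnum : q * (q.den : ℚ) = (q.num : ℚ) := Rat.mul_den_eq_num q
    rw [eq_div_iff (by positivity)]
    push_cast
    rw [← hnum]; ring
  have := Rat.den_div_eq_of_coprime hd0 (Int.isCoprime_iff_gcd_eq_one.mp hcop2)
  rw [key]
  exact_mod_cast this

theorem stmt_2 (φ : ℝ) (a b : ℤ) (hb : b ≠ 0) (hcop : IsCoprime a b)
    (hb1 : b ≠ 1) (hb1' : b ≠ -1)
    (c : ℕ → ℚ)
    (hc : ∀ k : ℕ, (c k : ℝ) = 2 * Real.cos (2 ^ k * φ))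
    (h0 : (c 0 : ℝ) = (a : ℝ) / (b : ℝ)) :
    (∀ k : ℕ, (c (k + 1)).den = (c k).den ^ 2) ∧
      StrictMono (fun k => (c k).den) := by
  -- recurrence c (k+1) = c k ^ 2 - 2
  have hrec : ∀ k, c (k + 1) = c k ^ 2 - 2 := by
    intro k
    have : ((c (k + 1) : ℚ) : ℝ) = ((c k ^ 2 - 2 : ℚ) : ℝ) := by
      push_cast
      rw [hc, hc]
      have : (2 : ℝ) ^ (k + 1) * φ = 2 * (2 ^ k * φ) := by ring
      rw [this, Real.cos_two_mul]
      ring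
    exact_mod_cast this
  have hden : ∀ k, (c (k + 1)).den = (c k).den ^ 2 := by
    intro k; rw [hrec k]; exact den_sq_sub_two (c k)
  -- denominator of c 0
  have hd0 : 2 ≤ (c 0).den := by
    -- c 0 = a / b in ℚ
    have hc0 : c 0 = (a : ℚ) / (b : ℚ) := by
      have : ((c 0 : ℚ) : ℝ) = (((a : ℚ) / (b : ℚ) : ℚ) : ℝ) := by push_cast; exact h0
      exact_mod_cast this
    have hcop' : Nat.Coprime a.natAbs b.natAbs := Int.isCoprime_iff_gcd_eq_one.mp hcop
    have hbabs : ((c 0).den : ℤ) = |b| := by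
      rcases lt_or_gt_of_ne hb with hneg | hpos
      · have : c 0 = ((-a : ℤ) : ℚ) / ((-b : ℤ) : ℚ) := by
          rw [hc0]; push_cast; rw [div_neg, neg_div, neg_neg]
        rw [this, Rat.den_div_eq_of_coprime (by omega) (by simpa using hcop'),
          abs_of_neg hneg]
      · rw [hc0, Rat.den_div_eq_of_coprime hpos hcop', abs_of_pos hpos]
    have : (2 : ℤ) ≤ |b| := by
      rcases abs_cases b with ⟨h, _⟩ | ⟨h, _⟩ <;> omega
    omega
  have hmono : ∀ k, 2 ≤ (c k).den := by
    intro k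
    induction k with
    | zero => exact hd0
    | succ n ih => rw [hden n]; nlinarith
  refine ⟨hden, strictMono_nat_of_lt_succ fun n => ?_⟩
  show (c n).den < (c (n+1)).den
  rw [hden n]
  have := hmono n
  nlinarith
end

section
/- If x is a nonzero rational number, then e^x is irrational. -/
open Polynomial intervalIntegral in
lemma key_integral (G : ℝ[X]) (t : ℝ) :
    ∫ u in (0:ℝ)..t, G.eval u * Real.exp (t - u)
      = (sumIDeriv G).eval 0 * Real.exp t - (sumIDeriv G).eval t := by
  have hFG : ∀ u : ℝ, (sumIDeriv G).eval u - (derivative (sumIDeriv G)).eval u = G.eval u := by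
    intro u
    nth_rewrite 1 [sumIDeriv_eq_self_add]
    simp
  have hderiv : ∀ u ∈ Set.uIcc (0:ℝ) t,
      HasDerivAt (fun u => -((sumIDeriv G).eval u * Real.exp (t - u)))
      (G.eval u * Real.exp (t - u)) u := by
    intro u _
    have h1 : HasDerivAt (fun u : ℝ => (sumIDeriv G).eval u)
        ((derivative (sumIDeriv G)).eval u) u := (sumIDeriv G).hasDerivAt u
    have h2 : HasDerivAt (fun u : ℝ => Real.exp (t - u)) (-Real.exp (t - u)) u := by
      have := ((hasDerivAt_id u).const_sub t).exp
      simpa using this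
    have := (h1.mul h2).neg
    convert this using 1
    case e'_9 => rw [← hFG u]; ring
    all_goals rfl
  have hint : IntervalIntegrable (fun u => G.eval u * Real.exp (t - u))
      MeasureTheory.volume 0 t := by
    apply Continuous.intervalIntegrable
    exact G.continuous.mul (Real.continuous_exp.comp (continuous_const.sub continuous_id))
  have := intervalIntegral.integral_eq_sub_of_hasDerivAt hderiv hint
  rw [this]; simp [Real.exp_zero]; ring

open Polynomial in
lemma dvd_eval_sumIDeriv (g : ℤ[X]) (n : ℕ) (r : ℤ) (p' : ℤ[X]) (h : g = (X - C r) ^ n * p') :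
    (n.factorial : ℤ) ∣ (sumIDeriv g).eval r := by
  obtain ⟨gp, -, hgp⟩ := Polynomial.aeval_sumIDeriv ℤ g n
  have h2 : g.map (algebraMap ℤ ℤ) = (X - C r) ^ n * p' := by
    rw [show algebraMap ℤ ℤ = RingHom.id ℤ from by ext; simp, Polynomial.map_id]; exact h
  have := hgp r ⟨p', h2⟩
  simp only [aeval_def, eval₂_eq_eval_map, show algebraMap ℤ ℤ = RingHom.id ℤ from by ext; simp,
    Polynomial.map_id, zsmul_eq_mul, nsmul_eq_mul] at this
  exact ⟨_, this⟩

open Polynomial in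
lemma exp_nat_irrational (p : ℕ) (hp : 0 < p) : Irrational (Real.exp p) := by
  rintro ⟨q, hq⟩
  have hep : (0:ℝ) < Real.exp p := Real.exp_pos _
  have hq0 : 0 < q := by
    have : (0:ℝ) < (q:ℝ) := hq ▸ hep
    exact_mod_cast this
  set a : ℤ := q.num with ha
  set b : ℤ := (q.den : ℤ) with hb
  have hb0 : 0 < b := by positivity
  have ha0 : 0 < a := Rat.num_pos.mpr hq0
  have hab : (a:ℝ) = Real.exp p * b := by
    rw [← hq]
    rw [ha, hb]
    push_cast
    rw [Rat.cast_def]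
    field_simp
  -- choose n
  have hto : Filter.Tendsto (fun n : ℕ => ((p:ℝ)^2)^n / n.factorial) Filter.atTop (nhds 0) :=
    FloorSemiring.tendsto_pow_div_factorial_atTop ((p:ℝ)^2)
  have hcpos : (0:ℝ) < 1 / ((b:ℝ) * p * Real.exp p) := by positivity
  obtain ⟨n, hn1, hn⟩ : ∃ n : ℕ, 1 ≤ n ∧ ((p:ℝ)^2)^n / n.factorial < 1 / ((b:ℝ) * p * Real.exp p) := by
    have := (hto.eventually (eventually_lt_nhds hcpos)).and (Filter.eventually_ge_atTop 1)
    obtain ⟨n, h1, h2⟩ := this.exists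
    exact ⟨n, h2, h1⟩
  have hbound : (b:ℝ) * ((p:ℝ)^(2*n+1) * Real.exp p) < n.factorial := by
    rw [div_lt_div_iff₀ (by positivity) (by positivity)] at hn
    calc (b:ℝ) * ((p:ℝ)^(2*n+1) * Real.exp p)
        = ((p:ℝ)^2)^n * ((b:ℝ) * p * Real.exp p) := by rw [← pow_mul]; ring
      _ < 1 * n.factorial := hn
      _ = n.factorial := one_mul _
  -- the polynomial
  set g : ℤ[X] := X^n * (C (p:ℤ) - X)^n with hg
  set F0 : ℤ := (sumIDeriv g).eval 0 with hF0
  set Fp : ℤ := (sumIDeriv g).eval (p:ℤ) with hFp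
  have hd0 : (n.factorial : ℤ) ∣ F0 :=
    dvd_eval_sumIDeriv g n 0 ((C (p:ℤ) - X)^n) (by rw [hg]; ring_nf; rw [map_zero]; ring)
  have hdp : (n.factorial : ℤ) ∣ Fp :=
    dvd_eval_sumIDeriv g n (p:ℤ) ((-1)^n * X^n)
      (by rw [hg, show (C (p:ℤ) - X) = -(X - C (p:ℤ)) from by ring, neg_pow]; ring)
  -- real version
  set G : ℝ[X] := g.map (Int.castRingHom ℝ) with hG
  have hGeval : ∀ u : ℝ, G.eval u = u^n * ((p:ℝ) - u)^n := by
    intro u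
    rw [hG, hg]
    simp [Polynomial.eval_map, Polynomial.eval₂_mul, Polynomial.eval₂_pow]
  have hSG : sumIDeriv G = (sumIDeriv g).map (Int.castRingHom ℝ) := by
    rw [hG, sumIDeriv_map]
  have hI := key_integral G (p:ℝ)
  have hS0 : (sumIDeriv G).eval 0 = (F0 : ℝ) := by
    rw [hSG, hF0]
    have := Polynomial.eval_intCast_map (Int.castRingHom ℝ) (sumIDeriv g) 0
    simpa using this
  have hSp : (sumIDeriv G).eval (p:ℝ) = (Fp : ℝ) := by
    rw [hSG, hFp]
    have := Polynomial.eval_intCast_map (Int.castRingHom ℝ) (sumIDeriv g) (p:ℤ)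
    simpa using this
  set I : ℝ := ∫ u in (0:ℝ)..(p:ℝ), G.eval u * Real.exp ((p:ℝ) - u) with hIdef
  have hIpos : 0 < I := by
    apply intervalIntegral.intervalIntegral_pos_of_pos_on
    · apply Continuous.intervalIntegrable
      exact G.continuous.mul (Real.continuous_exp.comp (continuous_const.sub continuous_id))
    · intro u hu
      rw [hGeval u]
      have h1 : 0 < u := hu.1
      have h2 : u < p := hu.2
      exact mul_pos (mul_pos (pow_pos h1 n) (pow_pos (by linarith) n)) (Real.exp_pos _)
    · exact_mod_cast hp
  have hIle : I ≤ (p:ℝ) * ((p:ℝ)^(2*n) * Real.exp p) := by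
    have hple : (0:ℝ) ≤ (p:ℝ) := by positivity
    calc I ≤ ∫ u in (0:ℝ)..(p:ℝ), (p:ℝ)^(2*n) * Real.exp p := by
          apply intervalIntegral.integral_mono_on (by exact_mod_cast hp.le)
          · apply Continuous.intervalIntegrable
            exact G.continuous.mul (Real.continuous_exp.comp (continuous_const.sub continuous_id))
          · apply Continuous.intervalIntegrable; continuity
          · intro u hu
            rw [hGeval u]
            have h1 : 0 ≤ u := hu.1
            have h2 : u ≤ (p:ℝ) := hu.2
            have e1 : u^n ≤ (p:ℝ)^n := pow_le_pow_left₀ h1 h2 n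
            have e2 : ((p:ℝ) - u)^n ≤ (p:ℝ)^n := pow_le_pow_left₀ (by linarith) (by linarith) n
            have e3 : Real.exp ((p:ℝ) - u) ≤ Real.exp p := Real.exp_le_exp.mpr (by linarith)
            calc u^n * ((p:ℝ)-u)^n * Real.exp ((p:ℝ)-u)
                ≤ (p:ℝ)^n * (p:ℝ)^n * Real.exp p := by
                  apply mul_le_mul (mul_le_mul e1 e2 (pow_nonneg (by linarith) n) (by positivity))
                    e3 (Real.exp_pos _).le (by positivity)
              _ = (p:ℝ)^(2*n) * Real.exp p := by rw [← pow_add]; ring_nf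
      _ = (p:ℝ) * ((p:ℝ)^(2*n) * Real.exp p) := by
          rw [intervalIntegral.integral_const]; simp
  -- the integer N
  set N : ℤ := a * F0 - b * Fp with hN
  have hIval : I = (F0:ℝ) * Real.exp p - (Fp:ℝ) := by
    rw [hI, hS0, hSp]
  have hNr : (N:ℝ) = b * I := by
    rw [hN, hIval]
    push_cast
    rw [hab]
    ring
  have hNpos : 0 < N := by
    have : (0:ℝ) < (N:ℝ) := by rw [hNr]; positivity
    exact_mod_cast this
  have hNdvd : (n.factorial : ℤ) ∣ N := by
    exact dvd_sub (Dvd.dvd.mul_left hd0 a) (Dvd.dvd.mul_left hdp b)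
  have hNge : (n.factorial : ℤ) ≤ N := Int.le_of_dvd hNpos hNdvd
  have : (n.factorial : ℝ) ≤ (N:ℝ) := by exact_mod_cast hNge
  rw [hNr] at this
  have : (b:ℝ) * I < (n.factorial:ℝ) := by
    calc (b:ℝ) * I ≤ (b:ℝ) * ((p:ℝ) * ((p:ℝ)^(2*n) * Real.exp p)) := by
          apply mul_le_mul_of_nonneg_left hIle (by positivity)
      _ = (b:ℝ) * ((p:ℝ)^(2*n+1) * Real.exp p) := by ring
      _ < n.factorial := hbound
  linarith

theorem stmt_16 (x : ℚ) (hx : x ≠ 0) : Irrational (Real.exp x) := by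
  by_contra h
  obtain ⟨q, hq⟩ := not_not.mp h
  set m : ℤ := x.num with hm
  set d : ℕ := x.den with hd
  have hd0 : (d:ℝ) ≠ 0 := by positivity
  have hxd : (x:ℝ) * d = (m:ℝ) := by
    rw [Rat.cast_def, hm, hd]
    field_simp
  have hexpm : Real.exp m = (q:ℝ) ^ d := by
    rw [← hxd, mul_comm, Real.exp_nat_mul, hq]
  have hm0 : m ≠ 0 := Rat.num_ne_zero.mpr hx
  rcases lt_or_gt_of_ne hm0 with hneg | hpos
  · have h1 : Irrational (Real.exp ((-m).toNat : ℕ)) :=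
      exp_nat_irrational (-m).toNat (by omega)
    apply h1
    refine ⟨(q ^ d)⁻¹, ?_⟩
    have : (((-m).toNat : ℤ) : ℝ) = -(m:ℝ) := by
      rw [Int.toNat_of_nonneg (by omega)]; push_cast; ring
    rw [show (((-m).toNat : ℕ) : ℝ) = -(m:ℝ) from by exact_mod_cast this,
      Real.exp_neg, hexpm]
    push_cast
    ring
  · have h1 : Irrational (Real.exp (m.toNat : ℕ)) :=
      exp_nat_irrational m.toNat (by omega)
    apply h1
    refine ⟨q ^ d, ?_⟩
    have : ((m.toNat : ℤ) : ℝ) = (m:ℝ) := by rw [Int.toNat_of_nonneg (by omega)]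
    rw [show ((m.toNat : ℕ) : ℝ) = (m:ℝ) from by exact_mod_cast this, hexpm]
    push_cast
    ring
end
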